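/- There exist a type X and a decision procedure P on Tree X such that P satisfies γ⁺-extended (γ⁺E) but P is not strongly inductive (SIND). (For example, the smaller-sub-problem-bias procedure: fix a linear order on X and a threshold N ≥ 1; on trees a with |⟦a⟧| ≤ N return the maximum of ⟦a⟧, and on a node recurse into the sub-tree whose extension is smallest.) -/
import Mathlib


/-- The algebraic datatype `Tree3 X` (the paper's `Tree`) of ternary trees with values at the leaves. -/
inductive Tree3 (X : Type) : Type where
  | Leaf : X → Tree3 X
  | Node : Tree3 X → Tree3 X → Tree3 X → Tree3 X

/-- The extension of a represented decision problem on `Tree3`. -/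
def Tree3.ext {X : Type} [DecidableEq X] : Tree3 X → Finset X
  | .Leaf x => {x}
  | .Node t₁ t₂ t₃ => t₁.ext ∪ t₂.ext ∪ t₃.ext

/-- The smaller-sub-problem-bias procedure on `ℕ` with threshold 1. -/
def myP : Tree3 ℕ → ℕ
  | .Leaf x => x
  | .Node t₁ t₂ t₃ =>
    if t₁.ext.card ≤ t₂.ext.card ∧ t₁.ext.card ≤ t₃.ext.card then myP t₁
    else if t₂.ext.card ≤ t₃.ext.card then myP t₂ else myP t₃

lemma myP_mem : ∀ a : Tree3 ℕ, myP a ∈ a.ext := by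
  intro a
  induction a with
  | Leaf x => simp [myP, Tree3.ext]
  | Node t₁ t₂ t₃ h₁ h₂ h₃ =>
    simp only [myP, Tree3.ext, Finset.mem_union]
    split
    · exact Or.inl (Or.inl h₁)
    · split
      · exact Or.inl (Or.inr h₂)
      · exact Or.inr h₃

/-- There are a type `X` and a decision procedure `P` on `Tree3 X`
satisfying γ⁺-extended but not strongly inductive. -/
theorem stmt_14 : ∃ (X : Type) (inst : DecidableEq X),
    letI := inst
    ∃ P : Tree3 X → X,
      (∀ a : Tree3 X, P a ∈ a.ext) ∧
      -- γ⁺E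
      (∀ a b : Tree3 X, P b ∈ a.ext →
        ∃ d : Tree3 X, d.ext = a.ext ∪ b.ext ∧ P d = P a) ∧
      -- not SIND
      ¬(∀ x₁ x₂ x₃ : X,
          (∀ t₁ t₂ t₃ : Tree3 X, P t₁ = x₁ → P t₂ = x₂ → P t₃ = x₃ →
            P (Tree3.Node t₁ t₂ t₃) = x₁) ∨
          (∀ t₁ t₂ t₃ : Tree3 X, P t₁ = x₁ → P t₂ = x₂ → P t₃ = x₃ →
            P (Tree3.Node t₁ t₂ t₃) = x₂) ∨
          (∀ t₁ t₂ t₃ : Tree3 X, P t₁ = x₁ → P t₂ = x₂ → P t₃ = x₃ →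
            P (Tree3.Node t₁ t₂ t₃) = x₃)) := by
  refine ⟨ℕ, inferInstance, myP, myP_mem, ?_, ?_⟩
  · intro a b hb
    refine ⟨Tree3.Node (Tree3.Leaf (myP a)) a b, ?_, ?_⟩
    · have ha : myP a ∈ a.ext := myP_mem a
      ext y
      simp only [Tree3.ext, Finset.mem_union, Finset.mem_singleton]
      constructor
      · rintro ((rfl | h) | h)
        · exact Or.inl ha
        · exact Or.inl h
        · exact Or.inr h
      · rintro (h | h)
        · exact Or.inl (Or.inr h)
        · exact Or.inr h
    · have ha : (1 : ℕ) ≤ a.ext.card := Finset.card_pos.mpr ⟨_, myP_mem a⟩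
      have hbb : (1 : ℕ) ≤ b.ext.card := Finset.card_pos.mpr ⟨_, myP_mem b⟩
      simp only [myP, Tree3.ext, Finset.card_singleton]
      rw [if_pos ⟨ha, hbb⟩]
  · intro h
    rcases h 0 1 2 with h | h | h
    · have := h (Tree3.Node (Tree3.Leaf 0) (Tree3.Leaf 0) (Tree3.Leaf 3))
        (Tree3.Leaf 1) (Tree3.Leaf 2) (by decide) rfl rfl
      revert this; decide
    · have := h (Tree3.Leaf 0) (Tree3.Leaf 1) (Tree3.Leaf 2) rfl rfl rfl
      revert this; decide
    · have := h (Tree3.Leaf 0) (Tree3.Leaf 1) (Tree3.Leaf 2) rfl rfl rfl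
      revert this; decide
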